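/- The cyclic coded-at-the-bottom scheme with Δ = n, ℓ_u uncoded symbols at the top and ℓ_c random-coded symbols at the bottom of each worker (total ℓ = ℓ_u + ℓ_c = γΔ, γ = γ_u + γ_c) is resilient to s = ⌊(n²γ_c + nγ_u - 1)/(nγ_c + 1)⌋ stragglers: from any k = n - s workers, the union of uncoded symbols together with the k·ℓ_c generic coded equations determines all Δ unknowns. -/
import Mathlib

open Finset

lemma cover_card_aux (n ℓu : ℕ) (hn : 0 < n) (hu : 0 < ℓu) (hle : ℓu ≤ n)
    (T : Finset (Fin n)) (hT : T.Nonempty) :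
    min n (ℓu + T.card - 1) ≤
      (T.biUnion (fun i => (Finset.range ℓu).image (fun p => ((i : ℕ) + p) % n))).card := by
  set C := T.biUnion (fun i => (Finset.range ℓu).image (fun p => ((i : ℕ) + p) % n)) with hC
  by_cases hfull : ∀ y < n, y ∈ C
  · have hsub : Finset.range n ⊆ C := by
      intro y hy; exact hfull y (mem_range.mp hy)
    calc min n (ℓu + T.card - 1) ≤ n := min_le_left _ _
      _ = (range n).card := (card_range n).symm
      _ ≤ C.card := card_le_card hsub
  · push_neg at hfull
    obtain ⟨x, hx, hxC⟩ := hfull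
    set c := n - 1 - x with hc
    set b : Fin n → ℕ := fun i => ((i : ℕ) + c) % n with hb
    have hblt : ∀ i : Fin n, b i < n := fun i => Nat.mod_lt _ hn
    -- key: no arc wraps past x, i.e. b i + ℓu ≤ n
    have hbi : ∀ i ∈ T, b i + ℓu ≤ n := by
      intro i hi
      by_contra hcon
      push_neg at hcon
      set p := n - 1 - b i with hp
      have hplt : p < ℓu := by have := hblt i; omega
      have hmem : ((i : ℕ) + p) % n = x := by
        have h1 : ((i : ℕ) + p) + ((i : ℕ) + c) ≡ ((i : ℕ) + p) + b i [MOD n] :=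
          (Nat.mod_modEq ((i : ℕ) + c) n).symm.add_left _
        have h2 : ((i : ℕ) + p) + b i = x + ((i : ℕ) + c) := by
          have := hblt i; have hi2 := i.2; omega
        have h3 : ((i : ℕ) + p) + ((i : ℕ) + c) ≡ x + ((i : ℕ) + c) [MOD n] := by
          rw [← h2]; exact h1
        have h4 : ((i : ℕ) + p) ≡ x [MOD n] := h3.add_right_cancel' _
        have h5 : ((i : ℕ) + p) % n = x % n := h4
        rwa [Nat.mod_eq_of_lt hx] at h5
      exact hxC (mem_biUnion.mpr ⟨i, hi, mem_image.mpr ⟨p, mem_range.mpr hplt, hmem⟩⟩)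
    -- the shift σ
    set σ : ℕ → ℕ := fun y => (y + c) % n with hσ
    have hCsub : ∀ y ∈ C, y < n := by
      intro y hy
      obtain ⟨i, _, hy2⟩ := mem_biUnion.mp hy
      obtain ⟨p, _, hy3⟩ := mem_image.mp hy2
      rw [← hy3]; exact Nat.mod_lt _ hn
    have hσinj : Set.InjOn σ C := by
      intro y1 hy1 y2 hy2 h
      have h' : y1 + c ≡ y2 + c [MOD n] := by
        unfold σ at h
        exact h
      have h2 : y1 % n = y2 % n := h'.add_right_cancel' _
      have := h2
      rwa [Nat.mod_eq_of_lt (hCsub y1 hy1), Nat.mod_eq_of_lt (hCsub y2 hy2)] at this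
    have hcardeq : (C.image σ).card = C.card := card_image_of_injOn hσinj
    -- image of C under σ is the unwrapped arcs
    have hCimg : C.image σ = T.biUnion (fun i => (Finset.range ℓu).image (fun p => b i + p)) := by
      rw [hC, biUnion_image]
      refine biUnion_congr rfl ?_
      intro i hi
      rw [Finset.image_image]
      refine image_congr ?_
      intro p hp
      have hplt := mem_range.mp hp
      have h1 : σ (((i : ℕ) + p) % n) = ((i : ℕ) + p + c) % n := by
        show (((i : ℕ) + p) % n + c) % n = _
        rw [Nat.mod_add_mod]
      have h2 : ((i : ℕ) + p + c) % n = (b i + p) % n := by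
        rw [hb]
        simp only []
        rw [Nat.mod_add_mod]
        ring_nf
      have h3 : (b i + p) % n = b i + p :=
        Nat.mod_eq_of_lt (by have := hbi i hi; omega)
      simp only [Function.comp]
      rw [h1, h2, h3]
    -- b is injective on T
    have hbinj : Set.InjOn b T := by
      intro i1 _ i2 _ h
      have h' : (i1 : ℕ) + c ≡ (i2 : ℕ) + c [MOD n] := h
      have : (i1 : ℕ) % n = (i2 : ℕ) % n := h'.add_right_cancel' _
      rw [Nat.mod_eq_of_lt i1.2, Nat.mod_eq_of_lt i2.2] at this
      exact Fin.ext this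
    set D := T.biUnion (fun i => (Finset.range ℓu).image (fun p => b i + p)) with hD
    have hTne : (T.image b).Nonempty := hT.image b
    set m := (T.image b).max' hTne with hm
    obtain ⟨i0, hi0, hbi0⟩ := mem_image.mp ((T.image b).max'_mem hTne)
    have hsub : ((T.image b).erase m) ∪ ((Finset.range ℓu).image (fun p => m + p)) ⊆ D := by
      intro y hy
      rcases mem_union.mp hy with hy | hy
      · obtain ⟨i, hi, hbiy⟩ := mem_image.mp (erase_subset _ _ hy)
        refine mem_biUnion.mpr ⟨i, hi, mem_image.mpr ⟨0, mem_range.mpr hu, by omega⟩⟩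
      · obtain ⟨p, hp, hpy⟩ := mem_image.mp hy
        exact mem_biUnion.mpr ⟨i0, hi0, mem_image.mpr ⟨p, hp, by rw [hbi0]; exact hpy⟩⟩
    have hdisj : Disjoint ((T.image b).erase m) ((Finset.range ℓu).image (fun p => m + p)) := by
      rw [disjoint_left]
      intro y hy hy2
      obtain ⟨p, _, hpy⟩ := mem_image.mp hy2
      have h1 : y ≠ m := ne_of_mem_erase hy
      have h2 : y ≤ m := le_max' _ _ (erase_subset _ _ hy)
      omega
    have hcard1 : ((T.image b).erase m).card = T.card - 1 := by
      rw [card_erase_of_mem ((T.image b).max'_mem hTne), card_image_of_injOn hbinj]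
    have hcard2 : ((Finset.range ℓu).image (fun p => m + p)).card = ℓu := by
      rw [card_image_of_injective _ (add_right_injective m), card_range]
    have hk : 1 ≤ T.card := hT.card_pos
    have hDcard : T.card - 1 + ℓu ≤ D.card := by
      calc T.card - 1 + ℓu
          = (((T.image b).erase m) ∪ ((Finset.range ℓu).image (fun p => m + p))).card := by
            rw [card_union_of_disjoint hdisj, hcard1, hcard2]
        _ ≤ D.card := card_le_card hsub
    have : min n (ℓu + T.card - 1) ≤ T.card - 1 + ℓu := by omega
    calc min n (ℓu + T.card - 1) ≤ T.card - 1 + ℓu := this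
      _ ≤ D.card := hDcard
      _ = (C.image σ).card := by rw [hCimg]
      _ = C.card := hcardeq

theorem stmt15 (n ℓu ℓc : ℕ) (hn : 0 < n) (hu : 0 < ℓu) (hle : ℓu + ℓc ≤ n) :
    ∀ S : Finset (Fin n), S.card ≤ (n * ℓc + ℓu - 1) / (ℓc + 1) →
      n ≤ ((Finset.univ \ S).biUnion
            (fun i => (Finset.range ℓu).image (fun p => ((i : ℕ) + p) % n))).card
          + (Finset.univ \ S).card * ℓc := by
  intro S hS
  set s := (n * ℓc + ℓu - 1) / (ℓc + 1) with hs
  set T := (Finset.univ \ S) with hT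
  have hTcard : T.card = n - S.card := by
    rw [hT, card_sdiff_of_subset (subset_univ S), card_univ, Fintype.card_fin]
  have hslt : s < n := by
    rw [hs, Nat.div_lt_iff_lt_mul (by omega : 0 < ℓc + 1)]
    have : n * (ℓc + 1) = n * ℓc + n := by ring
    omega
  have hScard : S.card ≤ n := by
    calc S.card ≤ (univ : Finset (Fin n)).card := card_le_card (subset_univ S)
      _ = n := by rw [card_univ, Fintype.card_fin]
  have hk1 : 1 ≤ T.card := by omega
  have hTne : T.Nonempty := card_pos.mp hk1
  -- key arithmetic: n ≤ ℓu - 1 + T.card * (ℓc + 1)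
  have hkey : n ≤ ℓu - 1 + T.card * (ℓc + 1) := by
    have h1 : s * (ℓc + 1) ≤ n * ℓc + ℓu - 1 := Nat.div_mul_le_self _ _
    have h2 : n ≤ s + T.card := by omega
    have h3 : n * (ℓc + 1) ≤ (s + T.card) * (ℓc + 1) := Nat.mul_le_mul_right _ h2
    have h4 : (s + T.card) * (ℓc + 1) = s * (ℓc + 1) + T.card * (ℓc + 1) := by ring
    have h5 : n * (ℓc + 1) = n * ℓc + n := by ring
    -- avoid nonlinear terms in omega
    generalize hA : s * (ℓc + 1) = A at h1 h4
    generalize hB : T.card * (ℓc + 1) = B at h4 ⊢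
    generalize hP : n * ℓc = P at h1 h5
    generalize hQ : n * (ℓc + 1) = Q at h3 h5
    generalize hR : (s + T.card) * (ℓc + 1) = R at h3 h4
    omega
  have hmin := cover_card_aux n ℓu hn hu (by omega) T hTne
  have hTc : T.card * (ℓc + 1) = T.card * ℓc + T.card := by ring
  generalize hB : T.card * ℓc = B at hTc ⊢
  generalize hB2 : T.card * (ℓc + 1) = B2 at hTc hkey
  omega
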